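/- Let f be differentiable on (a, +∞) with f(a) < 0, lim_{ξ→+∞} f(ξ) > 0, f'(ξ) > 0 for all ξ ∈ (a, +∞), and assume either f' is monotone on (a, +∞) or there exists ξ_in ∈ (a, +∞) such that f' is monotonically decreasing on (a, ξ_in] and monotonically increasing on [ξ_in, +∞). Then f has a unique root ξ* in (a, +∞), and for any initial value ξ₀ ∈ (a, ξ*], the Newton iteration sequence {ξ_n} remains in (a, +∞) and converges to ξ*. -/

import Mathlib

/-- General Newton convergence: `f` differentiable with positive derivative on `(a, ∞)`,
`f a < 0` (continuously from the right), positive limit at `+∞`, and `f'` either monotone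
on `(a, ∞)` or decreasing on `(a, ξ_in]` then increasing on `[ξ_in, ∞)` for some inflection
point `ξ_in`.  Then `f` has a unique root `ξ*` in `(a, ∞)`, and for any initial value
`ξ₀ ∈ (a, ξ*]` the Newton sequence stays in `(a, ∞)` and converges to `ξ*`. -/
theorem newton_general_converges
    (f f' : ℝ → ℝ) (a : ℝ)
    (hderiv : ∀ ξ ∈ Set.Ioi a, HasDerivAt f (f' ξ) ξ)
    (hpos : ∀ ξ ∈ Set.Ioi a, 0 < f' ξ)
    (hcont : ContinuousWithinAt f (Set.Ici a) a)
    (hfa : f a < 0)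
    (hlim : Filter.Tendsto f Filter.atTop Filter.atTop ∨
      ∃ M : ℝ, 0 < M ∧ Filter.Tendsto f Filter.atTop (nhds M))
    (hstruct : (MonotoneOn f' (Set.Ioi a) ∨ AntitoneOn f' (Set.Ioi a)) ∨
      ∃ ξin, a < ξin ∧ AntitoneOn f' (Set.Ioc a ξin) ∧ MonotoneOn f' (Set.Ici ξin)) :
    ∃ ξs, a < ξs ∧ f ξs = 0 ∧ (∀ y, a < y → f y = 0 → y = ξs) ∧
      ∀ (ξ₀ : ℝ) (x : ℕ → ℝ), a < ξ₀ → ξ₀ ≤ ξs → x 0 = ξ₀ →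
        (∀ n, x (n + 1) = x n - f (x n) / f' (x n)) →
        (∀ n, a < x n) ∧ Filter.Tendsto x Filter.atTop (nhds ξs) := by
  classical
  -- continuity on `Ici a`
  have hcIci : ContinuousOn f (Set.Ici a) := by
    intro y hy
    rcases eq_or_lt_of_le (Set.mem_Ici.mp hy) with h | h
    · exact h ▸ hcont
    · exact ((hderiv y h).continuousAt).continuousWithinAt
  -- strict monotonicity on `Ici a`
  have hsm : StrictMonoOn f (Set.Ici a) := by
    apply strictMonoOn_of_deriv_pos (convex_Ici a) hcIci
    intro x hx
    rw [interior_Ici] at hx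
    rw [(hderiv x hx).deriv]
    exact hpos x hx
  -- find `b > a` with `f b > 0`
  obtain ⟨b, hab, hfb⟩ : ∃ b, a < b ∧ 0 < f b := by
    rcases hlim with h | ⟨M, hM, h⟩
    · obtain ⟨b, hb1, hb2⟩ := ((Filter.eventually_gt_atTop a).and
        (h.eventually_gt_atTop 0)).exists
      exact ⟨b, hb1, hb2⟩
    · obtain ⟨b, hb1, hb2⟩ := ((Filter.eventually_gt_atTop a).and
        (h.eventually (eventually_gt_nhds (by linarith : (0:ℝ) < M)))).exists
      exact ⟨b, hb1, hb2⟩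
  -- the root
  obtain ⟨ξs, hξmem, hroot⟩ := intermediate_value_Icc hab.le
    (hcIci.mono Set.Icc_subset_Ici_self) ⟨hfa.le, hfb.le⟩
  have haξ : a < ξs := by
    rcases eq_or_lt_of_le hξmem.1 with h | h
    · exfalso; rw [← h] at hroot; exact absurd hroot (by linarith)
    · exact h
  have huniq : ∀ y, a < y → f y = 0 → y = ξs := by
    intro y hy hfy
    exact hsm.injOn hy.le haξ.le (by rw [hfy, hroot])
  -- sign facts
  have hfle : ∀ y, a ≤ y → y ≤ ξs → f y ≤ 0 := by
    intro y h1 h2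
    have := hsm.monotoneOn h1 haξ.le h2
    rw [hroot] at this; exact this
  have hfge : ∀ y, ξs ≤ y → 0 ≤ f y := by
    intro y h1
    have := hsm.monotoneOn haξ.le (haξ.le.trans h1) h1
    rw [hroot] at this; exact this
  -- bound on `f'` on compact subintervals
  have hbound : ∀ u v y : ℝ, a < u → u ≤ y → y ≤ v → f' y ≤ max (f' u) (f' v) := by
    intro u v y hu huy hyv
    have hay : a < y := lt_of_lt_of_le hu huy
    have hav : a < v := lt_of_lt_of_le hay hyv
    rcases hstruct with (hm | hm) | ⟨ξin, hain, hanti, hmono2⟩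
    · exact le_max_of_le_right (hm (Set.mem_Ioi.mpr hay) (Set.mem_Ioi.mpr hav) hyv)
    · exact le_max_of_le_left (hm (Set.mem_Ioi.mpr hu) (Set.mem_Ioi.mpr hay) huy)
    · by_cases hyi : y ≤ ξin
      · exact le_max_of_le_left (hanti ⟨hu, huy.trans hyi⟩ ⟨hay, hyi⟩ huy)
      · push_neg at hyi
        exact le_max_of_le_right (hmono2 (Set.mem_Ici.mpr hyi.le)
          (Set.mem_Ici.mpr (hyi.le.trans hyv)) hyv)
  -- Newton step stays above the current point when `f ≤ 0`
  have L1 : ∀ y, a < y → f y ≤ 0 → y ≤ y - f y / f' y := by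
    intro y hay hfy
    have h := div_nonneg (neg_nonneg.mpr hfy) (hpos y hay).le
    rw [neg_div] at h
    linarith
  -- Newton step below current point when `f ≥ 0`
  have L2 : ∀ y, a < y → 0 ≤ f y → y - f y / f' y ≤ y := by
    intro y hay hfy
    have h := div_nonneg hfy (hpos y hay).le
    linarith
  -- Newton step stays below the root, when `f'` is antitone below the root
  have Lbelow : (∀ p q, a < p → p ≤ q → q ≤ ξs → f' q ≤ f' p) →
      ∀ y, a < y → y ≤ ξs → y - f y / f' y ≤ ξs := by
    intro hanti y hay hyξ
    rcases eq_or_lt_of_le hyξ with rfl | hy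
    · rw [hroot]; simp
    · obtain ⟨c, hc, hceq⟩ := exists_hasDerivAt_eq_slope f f' hy
        (hcIci.mono (Set.Icc_subset_Ici_self.trans (Set.Ici_subset_Ici.mpr hay.le)))
        (fun z hz => hderiv z (hay.trans hz.1))
      have hfc : f' c ≤ f' y := hanti y c hay hc.1.le hc.2.le
      have hpy := hpos y hay
      rw [hroot] at hceq
      rw [hceq] at hfc
      have h2 : 0 - f y ≤ f' y * (ξs - y) := by
        have := (div_le_iff₀ (by linarith : (0:ℝ) < ξs - y)).mp hfc
        linarith [this]
      have h3 : -(f y / f' y) ≤ ξs - y := by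
        rw [← neg_div, div_le_iff₀ hpy]
        linarith
      linarith
  -- Newton step stays above the root, when `f'` is monotone above the root
  have Labove : (∀ p q, ξs ≤ p → p ≤ q → f' p ≤ f' q) →
      ∀ y, ξs ≤ y → ξs ≤ y - f y / f' y := by
    intro hmono y hξy
    rcases eq_or_lt_of_le hξy with rfl | hy
    · rw [hroot]; simp
    · obtain ⟨c, hc, hceq⟩ := exists_hasDerivAt_eq_slope f f' hy
        (hcIci.mono (Set.Icc_subset_Ici_self.trans (Set.Ici_subset_Ici.mpr haξ.le)))
        (fun z hz => hderiv z (haξ.trans hz.1))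
      have hay : a < y := haξ.trans hy
      have hfc : f' c ≤ f' y := hmono c y hc.1.le hc.2.le
      have hpy := hpos y hay
      rw [hroot] at hceq
      rw [hceq] at hfc
      have h2 : f y - 0 ≤ f' y * (y - ξs) := by
        have := (div_le_iff₀ (by linarith : (0:ℝ) < y - ξs)).mp hfc
        linarith [this]
      have h3 : f y / f' y ≤ y - ξs := by
        rw [div_le_iff₀ hpy]
        linarith
      linarith
  refine ⟨ξs, haξ, hroot, huniq, ?_⟩
  intro ξ₀ x hξ₀ hξ₀ξ hx0 hrec
  by_cases hall : ∀ n, x n ≤ ξs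
  · -- the sequence stays below the root: it is increasing
    have hgt : ∀ n, a < x n := by
      intro n; induction n with
      | zero => rw [hx0]; exact hξ₀
      | succ n ih =>
        rw [hrec n]
        exact lt_of_lt_of_le ih (L1 (x n) ih (hfle _ ih.le (hall n)))
    have hmonox : Monotone x := monotone_nat_of_le_succ (fun n => by
      rw [hrec n]; exact L1 _ (hgt n) (hfle _ (hgt n).le (hall n)))
    have hbdd : BddAbove (Set.range x) := ⟨ξs, by rintro _ ⟨n, rfl⟩; exact hall n⟩
    have htend : Filter.Tendsto x Filter.atTop (nhds (⨆ n, x n)) :=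
      tendsto_atTop_ciSup hmonox hbdd
    set L := ⨆ n, x n with hLdef
    have hxleL : ∀ n, x n ≤ L := fun n => le_ciSup hbdd n
    have hLξ : L ≤ ξs := ciSup_le hall
    have haL : a < L := lt_of_lt_of_le (hgt 0) (hxleL 0)
    have hfL : f L = 0 := by
      by_contra hne
      have hfLneg : f L < 0 := lt_of_le_of_ne (hfle L haL.le hLξ) hne
      have hd : Filter.Tendsto (fun n => x (n + 1) - x n) Filter.atTop (nhds 0) := by
        have h1 : Filter.Tendsto (fun n => x (n + 1)) Filter.atTop (nhds L) :=
          htend.comp (Filter.tendsto_add_atTop_nat 1)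
        simpa using h1.sub htend
      set B := max (f' (x 0)) (f' ξs) with hB
      have hBpos : 0 < B := lt_max_of_lt_left (hpos _ (hgt 0))
      have hkey : ∀ n, -(f L / B) ≤ x (n + 1) - x n := by
        intro n
        rw [hrec n]
        have hfn : f' (x n) ≤ B := hbound (x 0) ξs (x n) (hgt 0)
          (hmonox (Nat.zero_le n)) (hall n)
        have hfxn : f (x n) ≤ f L := hsm.monotoneOn (hgt n).le haL.le (hxleL n)
        have hdl : -f L / B ≤ -f (x n) / f' (x n) :=
          div_le_div₀ (by linarith) (by linarith) (hpos _ (hgt n)) hfn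
        rw [neg_div, neg_div] at hdl
        linarith
      have h0 := ge_of_tendsto' hd hkey
      have : f L / B < 0 := div_neg_of_neg_of_pos hfLneg hBpos
      linarith
    have hLeq : L = ξs := huniq L haL hfL
    exact ⟨hgt, hLeq ▸ htend⟩
  · -- the sequence crosses the root
    push_neg at hall
    obtain ⟨N₀, hN₀⟩ := hall
    -- if `f'` were antitone up to the root, the sequence could never cross: contradiction
    have hcontra : (∀ p q, a < p → p ≤ q → q ≤ ξs → f' q ≤ f' p) → False := by
      intro hanti
      have hstay : ∀ n, a < x n ∧ x n ≤ ξs := by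
        intro n; induction n with
        | zero => rw [hx0]; exact ⟨hξ₀, hξ₀ξ⟩
        | succ n ih =>
          constructor
          · rw [hrec n]
            exact lt_of_lt_of_le ih.1 (L1 (x n) ih.1 (hfle _ ih.1.le ih.2))
          · rw [hrec n]
            exact Lbelow hanti (x n) ih.1 ih.2
      exact absurd (hstay N₀).2 (not_le.mpr hN₀)
    -- hence `f'` must be monotone above the root
    have hMonoAbove : ∀ p q, ξs ≤ p → p ≤ q → f' p ≤ f' q := by
      rcases hstruct with (hm | hm) | ⟨ξin, hain, hanti, hmono2⟩
      · intro p q hp hq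
        exact hm (Set.mem_Ioi.mpr (lt_of_lt_of_le haξ hp))
          (Set.mem_Ioi.mpr (lt_of_lt_of_le haξ (hp.trans hq))) hq
      · exact absurd (fun p q hp hpq hqξ =>
          hm (Set.mem_Ioi.mpr hp) (Set.mem_Ioi.mpr (lt_of_lt_of_le hp hpq)) hpq) hcontra
      · by_cases hinξ : ξin ≤ ξs
        · intro p q hp hq
          exact hmono2 (Set.mem_Ici.mpr (hinξ.trans hp))
            (Set.mem_Ici.mpr (hinξ.trans (hp.trans hq))) hq
        · push_neg at hinξ
          exact absurd (fun p q hp hpq hqξ =>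
            hanti ⟨hp, hpq.trans (hqξ.trans hinξ.le)⟩
              ⟨lt_of_lt_of_le hp hpq, hqξ.trans hinξ.le⟩ hpq) hcontra
    have Lab := Labove hMonoAbove
    -- all terms stay above `a`
    have hgt : ∀ n, a < x n := by
      intro n; induction n with
      | zero => rw [hx0]; exact hξ₀
      | succ n ih =>
        rcases le_or_gt (x n) ξs with h | h
        · rw [hrec n]
          exact lt_of_lt_of_le ih (L1 (x n) ih (hfle _ ih.le h))
        · rw [hrec n]
          exact lt_of_lt_of_le haξ (Lab (x n) h.le)
    -- from `N₀` on, the sequence stays above the root and decreases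
    have hinv : ∀ k, ξs ≤ x (N₀ + k) := by
      intro k; induction k with
      | zero => exact hN₀.le
      | succ k ih =>
        show ξs ≤ x (N₀ + k + 1)
        rw [hrec (N₀ + k)]
        exact Lab _ ih
    have hdec : ∀ k, x (N₀ + (k + 1)) ≤ x (N₀ + k) := by
      intro k
      show x (N₀ + k + 1) ≤ x (N₀ + k)
      rw [hrec (N₀ + k)]
      exact L2 _ (hgt _) (hfge _ (hinv k))
    set g : ℕ → ℝ := fun k => x (N₀ + k) with hg
    have hg_anti : Antitone g := antitone_nat_of_succ_le hdec
    have hbddg : BddBelow (Set.range g) := ⟨ξs, by rintro _ ⟨k, rfl⟩; exact hinv k⟩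
    have htendg : Filter.Tendsto g Filter.atTop (nhds (⨅ k, g k)) :=
      tendsto_atTop_ciInf hg_anti hbddg
    set L := ⨅ k, g k with hLdef
    have hξL : ξs ≤ L := le_ciInf hinv
    have hLg : ∀ k, L ≤ g k := fun k => ciInf_le hbddg k
    have haL : a < L := haξ.trans_le hξL
    have hfL : f L = 0 := by
      by_contra hne
      have hfLpos : 0 < f L := lt_of_le_of_ne (hfge L hξL) (Ne.symm hne)
      have hd : Filter.Tendsto (fun k => g k - g (k + 1)) Filter.atTop (nhds 0) := by
        have h1 : Filter.Tendsto (fun k => g (k + 1)) Filter.atTop (nhds L) :=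
          htendg.comp (Filter.tendsto_add_atTop_nat 1)
        simpa using htendg.sub h1
      set B := max (f' ξs) (f' (g 0)) with hB
      have hBpos : 0 < B := lt_max_of_lt_left (hpos _ haξ)
      have hkey : ∀ k, f L / B ≤ g k - g (k + 1) := by
        intro k
        have hstep : g (k + 1) = g k - f (g k) / f' (g k) := hrec (N₀ + k)
        rw [hstep]
        have hagk : a < g k := hgt (N₀ + k)
        have hfn : f' (g k) ≤ B := hbound ξs (g 0) (g k) haξ (hinv k)
          (hg_anti (Nat.zero_le k))
        have hfgk : f L ≤ f (g k) := hsm.monotoneOn haL.le hagk.le (hLg k)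
        have hdl : f L / B ≤ f (g k) / f' (g k) :=
          div_le_div₀ (by linarith) hfgk (hpos _ hagk) hfn
        linarith
      have h0 := ge_of_tendsto' hd hkey
      have : 0 < f L / B := div_pos hfLpos hBpos
      linarith
    have hLeq : L = ξs := huniq L haL hfL
    have htendg' : Filter.Tendsto (fun n => x (n + N₀)) Filter.atTop (nhds ξs) := by
      have : (fun n => x (n + N₀)) = g := funext fun n => by simp [hg, add_comm]
      rw [this, ← hLeq]
      exact htendg
    exact ⟨hgt, (Filter.tendsto_add_atTop_iff_nat N₀).mp htendg'⟩
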